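/- Let e ∈ sp(V) ⊂ gl(V) be nilpotent, where V is a 2n-dimensional symplectic vector space over a field K of characteristic ≠ 2 (with sufficiently many elements), with Jordan generators w_i chosen so that odd-height pairs (i,i') satisfy the standard pairing conditions. Let α ∈ z_{gl}(e)* be defined by α(φ) = Σᵢ aᵢ cᵢ^{i,dᵢ}(φ), with pairwise distinct nonzero aᵢ satisfying a_{i'} = −a_i for paired blocks. Then α vanishes on the (−1)-eigenspace z₁ of the involution σ(ξ) = −Jξᵗ J⁻¹ acting on z_{gl}(e). -/
import Mathlib

open Module

/-- for a nilpotent `e ∈ sp(V)` with Jordan generators arranged in the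
standard way, the functional `α(φ) = Σᵢ aᵢ cᵢ^{i,dᵢ}(φ)` (with pairwise distinct nonzero
`aᵢ`, `a_{i'} = -a_i` for paired odd-dimensional blocks) vanishes on the `(-1)`-eigenspace
`z₁` of the symplectic involution acting on `z_{gl}(e)`; elements of `z₁` are exactly the
`ψ` commuting with `e` such that `Ω(ψ v, u) = Ω(v, ψ u)`. -/
theorem stmt_7 (K V : Type*) [Field K] [AddCommGroup V] [Module K V]
    (hchar : (2 : K) ≠ 0)
    (Ω : LinearMap.BilinForm K V) (hΩskew : ∀ v u, Ω v u = -Ω u v)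
    (hΩnd : Ω.Nondegenerate)
    (e : Module.End K V) (he : ∀ v u, Ω (e v) u = -Ω v (e u))
    (k : ℕ) (d : Fin k → ℕ) (w : Fin k → V)
    (b : Basis (Σ i : Fin k, Fin (d i + 1)) K V)
    (hb : ∀ i (s : Fin (d i + 1)), b ⟨i, s⟩ = (e ^ (s : ℕ)) (w i))
    (hnil : ∀ i, (e ^ (d i + 1)) (w i) = 0)
    (p : Fin k → Fin k) (hp : ∀ i, p (p i) = i) (hpd : ∀ i, d (p i) = d i)
    (hself : ∀ i, p i = i ↔ Odd (d i))
    (horth : ∀ i j, j ≠ p i → ∀ (s : Fin (d i + 1)) (t : Fin (d j + 1)),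
      Ω ((e ^ (s : ℕ)) (w i)) ((e ^ (t : ℕ)) (w j)) = 0)
    (hpair : ∀ i, Ω (w i) ((e ^ d i) (w (p i))) ≠ 0)
    (a : Fin k → K) (ha0 : ∀ i, a i ≠ 0) (hainj : Function.Injective a)
    (hap : ∀ i, p i ≠ i → a (p i) = -a i)
    (ψ : Module.End K V) (hψe : ⁅ψ, e⁆ = 0)
    (hψ1 : ∀ v u, Ω (ψ v) u = Ω v (ψ u)) :
    ∑ i : Fin k, a i * b.repr (ψ (w i)) ⟨i, Fin.last (d i)⟩ = 0 := by
  classical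
  have hsq : ∀ m : ℕ, ((-1 : K) ^ m) * ((-1 : K) ^ m) = 1 := by
    intro m; rw [← mul_pow]; norm_num
  have hcomm : ψ * e = e * ψ := by
    have h := hψe; rw [Ring.lie_def, sub_eq_zero] at h; exact h
  have hψpow : ∀ (t : ℕ) (u : V), ψ ((e ^ t) u) = (e ^ t) (ψ u) := by
    intro t u
    have h : ψ * e ^ t = e ^ t * ψ := Commute.pow_right hcomm t
    calc ψ ((e ^ t) u) = (ψ * e ^ t) u := rfl
      _ = (e ^ t * ψ) u := by rw [h]
      _ = (e ^ t) (ψ u) := rfl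
  have hsign : ∀ (s : ℕ) (v u : V), Ω ((e ^ s) v) u = (-1 : K) ^ s * Ω v ((e ^ s) u) := by
    intro s
    induction s with
    | zero => intro v u; simp
    | succ n ih =>
      intro v u
      have h1 : (e ^ (n + 1)) v = (e ^ n) (e v) := by rw [pow_succ]; rfl
      have h2 : e ((e ^ n) u) = (e ^ (n + 1)) u := by rw [pow_succ']; rfl
      rw [h1, ih, he, h2, pow_succ]
      ring
  have hsign' : ∀ (s : ℕ) (v u : V), Ω v ((e ^ s) u) = (-1 : K) ^ s * Ω ((e ^ s) v) u := by
    intro s v u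
    rw [hsign s v u, ← mul_assoc, hsq s, one_mul]
  have hnil' : ∀ (j : Fin k) (m : ℕ), d j < m → (e ^ m) (w j) = 0 := by
    intro j m hm
    obtain ⟨q, rfl⟩ := Nat.exists_eq_add_of_le (Nat.succ_le_of_lt hm)
    rw [add_comm, pow_add]
    show (e ^ q) ((e ^ (d j + 1)) (w j)) = 0
    rw [hnil j, map_zero]
  have horth' : ∀ (j j' : Fin k), j' ≠ j → ∀ (s t : ℕ),
      Ω ((e ^ s) (w j')) ((e ^ t) (w (p j))) = 0 := by
    intro j j' hne s t
    have hpne : p j ≠ p j' := by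
      intro h
      have := congrArg p h
      rw [hp, hp] at this
      exact hne this.symm
    by_cases hs : s ≤ d j'
    · by_cases ht : t ≤ d (p j)
      · have := horth j' (p j) hpne ⟨s, by omega⟩ ⟨t, by omega⟩
        simpa using this
      · rw [hnil' (p j) t (by omega), map_zero]
    · rw [hnil' j' s (by omega)]
      simp
  set R : Fin k → ℕ → K := fun j s =>
    if h : s < d j + 1 then b.repr (ψ (w j)) ⟨j, ⟨s, h⟩⟩ else 0 with hR
  have hexp : ∀ (j : Fin k) (t : ℕ),
      Ω (ψ (w j)) ((e ^ t) (w (p j))) =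
      ∑ s ∈ Finset.range (d j + 1),
        R j s * (-1 : K) ^ s * Ω (w j) ((e ^ (s + t)) (w (p j))) := by
    intro j t
    conv_lhs => rw [← b.sum_repr (ψ (w j))]
    simp only [map_sum, LinearMap.sum_apply, map_smul, LinearMap.smul_apply, smul_eq_mul]
    rw [← Finset.univ_sigma_univ, Finset.sum_sigma]
    rw [Finset.sum_eq_single j]
    · rw [← Fin.sum_univ_eq_sum_range
        (fun s => R j s * (-1 : K) ^ s * Ω (w j) ((e ^ (s + t)) (w (p j)))) (d j + 1)]
      refine Finset.sum_congr rfl fun s _ => ?_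
      have hpw : (e ^ ((s : ℕ) + t)) (w (p j)) = (e ^ (s : ℕ)) ((e ^ t) (w (p j))) := by
        rw [pow_add]; rfl
      have hRval : R j (s : ℕ) = b.repr (ψ (w j)) ⟨j, s⟩ := by
        simp only [hR]
        rw [dif_pos s.isLt]
      rw [hb j s, hsign, hpw, hRval, mul_assoc]
    · intro j' _ hne
      refine Finset.sum_eq_zero fun s _ => ?_
      rw [hb, horth' j j' hne (s : ℕ) t, mul_zero]
    · intro h
      exact absurd (Finset.mem_univ j) h
  have hmaster : ∀ (i : Fin k) (t : ℕ),
      ∑ s ∈ Finset.range (d i + 1),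
        (R i s * (-1 : K) ^ s - R (p i) s) * Ω (w i) ((e ^ (s + t)) (w (p i))) = 0 := by
    intro i t
    have h1 := hexp i t
    have h2 := hexp (p i) t
    rw [hp i, hpd i] at h2
    have hlink : Ω (ψ (w i)) ((e ^ t) (w (p i)))
        = (-1 : K) ^ (t + 1) * Ω (ψ (w (p i))) ((e ^ t) (w i)) := by
      rw [hψ1, hψpow, hsign', hΩskew ((e ^ t) (w i)) (ψ (w (p i))), pow_succ]
      ring
    have h3 : ∑ s ∈ Finset.range (d i + 1),
          R i s * (-1 : K) ^ s * Ω (w i) ((e ^ (s + t)) (w (p i)))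
        = ∑ s ∈ Finset.range (d i + 1),
          R (p i) s * Ω (w i) ((e ^ (s + t)) (w (p i))) := by
      rw [← h1, hlink, h2, Finset.mul_sum]
      refine Finset.sum_congr rfl fun s _ => ?_
      rw [hsign' (s + t) (w (p i)) (w i), hΩskew ((e ^ (s + t)) (w (p i))) (w i)]
      calc (-1 : K) ^ (t + 1) * (R (p i) s * (-1 : K) ^ s *
              ((-1 : K) ^ (s + t) * -(Ω (w i) ((e ^ (s + t)) (w (p i))))))
          = ((-1 : K) ^ t * (-1 : K) ^ t) * ((-1 : K) ^ s * (-1 : K) ^ s) *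
              (R (p i) s * Ω (w i) ((e ^ (s + t)) (w (p i)))) := by
            rw [pow_succ, pow_add]; ring
        _ = R (p i) s * Ω (w i) ((e ^ (s + t)) (w (p i))) := by
            rw [hsq, hsq, one_mul, one_mul]
    simp only [sub_mul]
    rw [Finset.sum_sub_distrib, h3, sub_self]
  have hGz : ∀ (i : Fin k) (m : ℕ), d i < m → Ω (w i) ((e ^ m) (w (p i))) = 0 := by
    intro i m hm
    rw [hnil' (p i) m (by rw [hpd]; exact hm), map_zero]
  have hzero : ∀ (i : Fin k) (s : ℕ), s ≤ d i → R i s * (-1 : K) ^ s - R (p i) s = 0 := by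
    intro i s
    induction s using Nat.strong_induction_on with
    | _ s ih =>
      intro hs
      have ht := hmaster i (d i - s)
      rw [Finset.sum_eq_single s] at ht
      · have hss : s + (d i - s) = d i := by omega
        rw [hss] at ht
        exact (mul_eq_zero.mp ht).resolve_right (hpair i)
      · intro s' hs' hne
        rcases Nat.lt_or_ge s' s with hlt | hge
        · rw [ih s' hlt (by omega), zero_mul]
        · have hmem := Finset.mem_range.mp hs'
          rw [hGz i (s' + (d i - s)) (by omega), mul_zero]
      · intro hns
        exact absurd (Finset.mem_range.mpr (by omega)) hns
  have hfix0 : ∀ i, p i = i → R i (d i) = 0 := by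
    intro i hfix
    have h1 := hzero i (d i) le_rfl
    rw [hfix, ((hself i).mp hfix).neg_one_pow] at h1
    have h2 : (2 : K) * R i (d i) = 0 := by linear_combination -h1
    exact (mul_eq_zero.mp h2).resolve_left hchar
  have hRtop : ∀ i, b.repr (ψ (w i)) ⟨i, Fin.last (d i)⟩ = R i (d i) := by
    intro i
    simp only [hR]
    rw [dif_pos (Nat.lt_succ_self (d i))]
    rfl
  calc ∑ i : Fin k, a i * b.repr (ψ (w i)) ⟨i, Fin.last (d i)⟩
      = ∑ i : Fin k, a i * R i (d i) := by
        refine Finset.sum_congr rfl fun i _ => ?_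
        rw [hRtop]
    _ = 0 := by
        refine Finset.sum_ninvolution p ?_ ?_ (fun i => Finset.mem_univ _) hp
        · intro i
          by_cases hfix : p i = i
          · rw [hfix, hfix0 i hfix, mul_zero, add_zero]
          · have heven : Even (d i) := Nat.not_odd_iff_even.mp (fun h => hfix ((hself i).mpr h))
            have h1 := sub_eq_zero.mp (hzero i (d i) le_rfl)
            rw [heven.neg_one_pow, mul_one] at h1
            rw [hap i hfix, hpd i, ← h1]
            ring
        · intro i hf hfix
          exact hf (by rw [hfix0 i hfix, mul_zero])
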